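/- Let n ≥ 3 and let S_n be the star graph on vertices {0,1,...,n−1} with center 0. Then |K_0| = ∑_{k=2}^{n−1} C(n−1,k)·C(n−1,k−1)·k!, where K_0 is the set of injective partial maps α on {0,...,n−1} with 0 ∉ dom(α), 0 ∈ im(α) and im(α) ∩ {1,...,n−1} ≠ ∅ that are partial endomorphisms of S_n. -/

import Mathlib

variable {V : Type*}

/-- Partial transformations of `V`. -/
abbrev PTrans (V : Type*) := V → Option V

/-- Monoid of partial transformations under (left-to-right) composition. -/
instance : Monoid (PTrans V) where
  mul f g := fun v => (f v).bind g
  one := fun v => some v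
  mul_assoc f g h := by
    funext v
    show ((f v).bind g).bind h = (f v).bind (fun x => (g x).bind h)
    cases f v <;> simp
  one_mul f := by funext v; rfl
  mul_one f := by
    funext v
    show (f v).bind (fun x => some x) = f v
    cases f v <;> simp

/-- Domain of a partial transformation. -/
def pdom (α : PTrans V) : Set V := {u | α u ≠ none}

/-- Image of a partial transformation. -/
def pim (α : PTrans V) : Set V := {v | ∃ u, α u = some v}

def IsPEnd (G : SimpleGraph V) (α : PTrans V) : Prop :=
  ∀ u v u' v', α u = some u' → α v = some v' → G.Adj u v → G.Adj u' v'

def IsPwEnd (G : SimpleGraph V) (α : PTrans V) : Prop :=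
  ∀ u v u' v', α u = some u' → α v = some v' → G.Adj u v → u' ≠ v' → G.Adj u' v'

def IsPsEnd (G : SimpleGraph V) (α : PTrans V) : Prop :=
  ∀ u v u' v', α u = some u' → α v = some v' → (G.Adj u v ↔ G.Adj u' v')

def IsPswEnd (G : SimpleGraph V) (α : PTrans V) : Prop :=
  ∀ u v u' v', α u = some u' → α v = some v' → ((G.Adj u v ∧ u' ≠ v') ↔ G.Adj u' v')

/-- Injectivity of a partial transformation. -/
def PInjective (α : PTrans V) : Prop :=
  ∀ u v w, α u = some w → α v = some w → u = v

open Classical in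
/-- The inverse of a partial (injective) transformation. -/
noncomputable def pinv (α : PTrans V) : PTrans V :=
  fun v => if h : ∃ u, α u = some v then some h.choose else none

/-- Partial automorphism: injective, and both it and its inverse are
partial endomorphisms. -/
def IsPAut (G : SimpleGraph V) (α : PTrans V) : Prop :=
  PInjective α ∧ IsPEnd G α ∧ IsPEnd G (pinv α)

/-- The star graph on vertices `{0,1,...,n-1}` with center `0`. -/
def starGraph (n : ℕ) : SimpleGraph (Fin n) :=
  SimpleGraph.fromRel (fun u _ => (u : ℕ) = 0)

-- auxiliary

lemma arith10 (n k : ℕ) (hk : 1 ≤ k) (hkn : k ≤ n) :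
    n.descFactorial k - (n-1).descFactorial k = k.factorial * (n-1).choose (k-1) := by
  obtain ⟨m, rfl⟩ : ∃ m, k = m + 1 := ⟨k - 1, by omega⟩
  obtain ⟨l, rfl⟩ : ∃ l, n = l + 1 := ⟨n - 1, by omega⟩
  simp only [Nat.succ_descFactorial_succ, Nat.add_sub_cancel, Nat.descFactorial_succ]
  have h1 : l.descFactorial m = m.factorial * l.choose m :=
    Nat.descFactorial_eq_factorial_mul_choose l m
  rw [← Nat.sub_mul, h1, Nat.factorial_succ]
  have : l + 1 - (l - m) = m + 1 := by omega
  rw [this]; ring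

open Classical in
lemma fiber_card10 {γ : Type*} [Fintype γ] {n : ℕ} (z : Fin n)
    (hk : 1 ≤ Fintype.card γ) (hkn : Fintype.card γ ≤ n) :
    Nat.card {f : γ ↪ Fin n // ∃ u, f u = z} =
      (Fintype.card γ).factorial * (n - 1).choose (Fintype.card γ - 1) := by
  have e : {f : γ ↪ Fin n // ¬ ∃ u, f u = z} ≃ (γ ↪ {x : Fin n // x ≠ z}) :=
    { toFun := fun f => ⟨fun u => ⟨f.1 u, fun h => f.2 ⟨u, h⟩⟩,
        fun a b h => f.1.2 (congrArg Subtype.val h)⟩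
      invFun := fun g => ⟨⟨fun u => (g u).1, fun a b h => g.2 (Subtype.ext h)⟩,
        fun ⟨u, hu⟩ => (g u).2 hu⟩
      left_inv := fun f => by ext u; rfl
      right_inv := fun g => by ext u; rfl }
  have hsub : Fintype.card {x : Fin n // x ≠ z} = n - 1 := by
    simp [Fintype.card_subtype_compl]
  have h1 : Nat.card {f : γ ↪ Fin n // ¬ ∃ u, f u = z}
      = (n-1).descFactorial (Fintype.card γ) := by
    rw [Nat.card_congr e, Nat.card_eq_fintype_card, Fintype.card_embedding_eq, hsub]
  have h2 : Nat.card (γ ↪ Fin n) = n.descFactorial (Fintype.card γ) := by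
    rw [Nat.card_eq_fintype_card, Fintype.card_embedding_eq, Fintype.card_fin]
  have h3 : Nat.card {f : γ ↪ Fin n // ∃ u, f u = z} =
      Nat.card (γ ↪ Fin n) - Nat.card {f : γ ↪ Fin n // ¬ ∃ u, f u = z} := by
    simp only [Nat.card_eq_fintype_card]
    have h := Fintype.card_subtype_compl (fun f : γ ↪ Fin n => ∃ u, f u = z)
    have hle := Fintype.card_subtype_le (fun f : γ ↪ Fin n => ∃ u, f u = z)
    omega
  rw [h3, h1, h2, arith10 n (Fintype.card γ) hk hkn]

/-- The map from pairs (domain, embedding) to partial transformations. -/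
def mkPT {n : ℕ} (D : Finset (Fin n)) (f : {x // x ∈ D} ↪ Fin n) : PTrans (Fin n) :=
  fun u => if h : u ∈ D then some (f ⟨u, h⟩) else none

theorem stmt10 (n : ℕ) (hn : 3 ≤ n) :
    Set.ncard {α : PTrans (Fin n) | PInjective α ∧ IsPEnd (starGraph n) α ∧
        (⟨0, by omega⟩ : Fin n) ∉ pdom α ∧ (⟨0, by omega⟩ : Fin n) ∈ pim α ∧
        ∃ j ∈ pim α, j ≠ ⟨0, by omega⟩} =
      ∑ k ∈ Finset.Icc 2 (n - 1), (n - 1).choose k * (n - 1).choose (k - 1) * k.factorial := by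
  classical
  set z : Fin n := ⟨0, by omega⟩ with hz
  -- IsPEnd is automatic when z ∉ pdom α
  have hend : ∀ α : PTrans (Fin n), z ∉ pdom α → IsPEnd (starGraph n) α := by
    intro α hα u v u' v' hu hv hadj
    exfalso
    rw [starGraph, SimpleGraph.fromRel_adj] at hadj
    apply hα
    rcases hadj.2 with h | h
    · have : u = z := Fin.ext h
      rw [← this]; simp [pdom, hu]
    · have : v = z := Fin.ext h
      rw [← this]; simp [pdom, hv]
  have hset : {α : PTrans (Fin n) | PInjective α ∧ IsPEnd (starGraph n) α ∧
        z ∉ pdom α ∧ z ∈ pim α ∧ ∃ j ∈ pim α, j ≠ z}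
      = {α : PTrans (Fin n) | PInjective α ∧ z ∉ pdom α ∧ z ∈ pim α ∧
        ∃ j ∈ pim α, j ≠ z} := by
    ext α
    simp only [Set.mem_setOf_eq]
    constructor
    · rintro ⟨h1, _, h3, h4, h5⟩; exact ⟨h1, h3, h4, h5⟩
    · rintro ⟨h1, h3, h4, h5⟩; exact ⟨h1, hend α h3, h3, h4, h5⟩
  rw [show {α : PTrans (Fin n) | PInjective α ∧ IsPEnd (starGraph n) α ∧
        (⟨0, by omega⟩ : Fin n) ∉ pdom α ∧ (⟨0, by omega⟩ : Fin n) ∈ pim α ∧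
        ∃ j ∈ pim α, j ≠ ⟨0, by omega⟩} = {α : PTrans (Fin n) | PInjective α ∧
        z ∉ pdom α ∧ z ∈ pim α ∧ ∃ j ∈ pim α, j ≠ z} from hset]
  -- the bijection
  set T := Σ D : {D : Finset (Fin n) // z ∉ D ∧ 2 ≤ D.card},
      {f : {x // x ∈ D.1} ↪ Fin n // ∃ u, f u = z} with hT
  set S := {α : PTrans (Fin n) | PInjective α ∧ z ∉ pdom α ∧ z ∈ pim α ∧
      ∃ j ∈ pim α, j ≠ z} with hS
  have key : Nat.card S = Nat.card T := by
    refine Nat.card_congr (Equiv.ofBijective (fun t : T =>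
      (⟨mkPT t.1.1 t.2.1, ?_, ?_, ?_, ?_⟩ : S)) ⟨?_, ?_⟩).symm
    · -- PInjective
      intro u v w hu hv
      simp only [mkPT] at hu hv
      split at hu
      case isTrue h1u =>
        split at hv
        case isTrue h1v =>
          have hw1 := Option.some_injective _ hu
          have hw2 := Option.some_injective _ hv
          have heq : t.2.1 ⟨u, h1u⟩ = t.2.1 ⟨v, h1v⟩ := by rw [hw1, hw2]
          exact congrArg Subtype.val (t.2.1.2 heq)
        case isFalse => exact absurd hv (by simp)
      case isFalse => exact absurd hu (by simp)
    · -- z ∉ pdom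
      simp only [pdom, Set.mem_setOf_eq, mkPT, not_not]
      rw [dif_neg t.1.2.1]
    · -- z ∈ pim
      obtain ⟨u, hu⟩ := t.2.2
      exact ⟨u.1, by simp [mkPT, u.2, hu]⟩
    · -- nonzero in image
      obtain ⟨a, ha, b, hb, hab⟩ := Finset.one_lt_card.mp t.1.2.2
      have hne : t.2.1 ⟨a, ha⟩ ≠ t.2.1 ⟨b, hb⟩ := by
        intro h; exact hab (congrArg Subtype.val (t.2.1.2 h))
      by_cases hza : t.2.1 ⟨a, ha⟩ = z
      · exact ⟨t.2.1 ⟨b, hb⟩, ⟨b, by simp [mkPT, hb]⟩, fun h => hne (by rw [hza, h])⟩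
      · exact ⟨t.2.1 ⟨a, ha⟩, ⟨a, by simp [mkPT, ha]⟩, hza⟩
    · -- injective
      rintro ⟨⟨D, hD⟩, ⟨f, hf⟩⟩ ⟨⟨D', hD'⟩, ⟨f', hf'⟩⟩ h
      have heq : mkPT D f = mkPT D' f' := congrArg Subtype.val h
      have hDD : D = D' := by
        ext u
        constructor
        · intro hu
          have := congrFun heq u
          rw [mkPT, mkPT, dif_pos hu] at this
          by_contra hu'
          rw [dif_neg hu'] at this; exact Option.some_ne_none _ this
        · intro hu
          have := congrFun heq u
          rw [mkPT, mkPT] at this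
          rw [dif_pos hu] at this
          by_contra hu'
          rw [dif_neg hu'] at this; exact Option.some_ne_none _ this.symm
      subst hDD
      have hff : f = f' := by
        ext ⟨u, hu⟩
        have := congrFun heq u
        rw [mkPT, mkPT, dif_pos hu, dif_pos hu] at this
        exact congrArg Fin.val (by simpa using this)
      subst hff
      rfl
    · -- surjective
      rintro ⟨α, h1, h2, h3, h4⟩
      set D : Finset (Fin n) := Finset.univ.filter (fun u => (α u).isSome) with hD
      have hmem : ∀ u, u ∈ D ↔ (α u).isSome := by
        intro u; simp [hD]
      have hzD : z ∉ D := by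
        rw [hmem]
        simp only [pdom, Set.mem_setOf_eq, not_not] at h2
        simp [h2]
      obtain ⟨u₀, hu₀⟩ := h3
      obtain ⟨j, ⟨u₁, hu₁⟩, hj⟩ := h4
      have hu01 : u₀ ≠ u₁ := by
        intro h
        subst h
        rw [hu₀] at hu₁
        exact hj (Option.some_injective _ hu₁).symm
      have hcard : 2 ≤ D.card := by
        rw [show (2:ℕ) = 1 + 1 from rfl]
        apply Finset.one_lt_card.mpr
        exact ⟨u₀, (hmem u₀).mpr (by simp [hu₀]), u₁, (hmem u₁).mpr (by simp [hu₁]), hu01⟩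
      refine ⟨⟨⟨D, hzD, hcard⟩, ⟨⟨fun x => (α x.1).get ((hmem x.1).mp x.2), ?_⟩, ?_⟩⟩, ?_⟩
      · -- injectivity of get
        rintro ⟨a, haD⟩ ⟨b, hbD⟩ hab
        have ha' : α a = some ((α a).get ((hmem a).mp haD)) := (Option.some_get _).symm
        have hb' : α b = some ((α b).get ((hmem b).mp hbD)) := (Option.some_get _).symm
        simp only at hab
        exact Subtype.ext (h1 a b _ ha' (hab ▸ hb'))
      · -- z in image
        have hu₀D : u₀ ∈ D := (hmem u₀).mpr (by simp [hu₀])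
        refine ⟨⟨u₀, hu₀D⟩, ?_⟩
        simp only [Function.Embedding.coeFn_mk]
        have : α u₀ = some z := hu₀
        exact Option.some_injective _ ((Option.some_get _).trans this)
      · -- mkPT gives back α
        apply Subtype.ext
        funext u
        simp only [mkPT]
        by_cases hu : u ∈ D
        · rw [dif_pos hu]
          exact Option.some_get _
        · rw [dif_neg hu]
          have := (hmem u).not
          rw [Option.not_isSome_iff_eq_none] at this
          exact (this.mp hu).symm
  rw [← Nat.card_coe_set_eq, key]
  -- now compute Nat.card T
  have hcardT : Nat.card T = ∑ D : {D : Finset (Fin n) // z ∉ D ∧ 2 ≤ D.card},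
      (D.1.card).factorial * (n - 1).choose (D.1.card - 1) := by
    rw [Nat.card_eq_fintype_card, Fintype.card_sigma]
    congr 1
    funext D
    rw [← Nat.card_eq_fintype_card]
    have h1 : 1 ≤ Fintype.card {x // x ∈ D.1} := by
      rw [Fintype.card_coe]; omega
    have h2 : Fintype.card {x // x ∈ D.1} ≤ n := by
      rw [Fintype.card_coe]
      have := Finset.card_le_univ D.1
      simpa using this
    have := fiber_card10 z h1 h2
    rw [this, Fintype.card_coe]
  rw [hcardT]
  -- rewrite sum over subtype as sum over biUnion of powersetCard
  set A : Finset (Finset (Fin n)) :=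
    (Finset.Icc 2 (n-1)).biUnion (fun k => Finset.powersetCard k ({z}ᶜ)) with hA
  have hAmem : ∀ D : Finset (Fin n), D ∈ A ↔ (z ∉ D ∧ 2 ≤ D.card) := by
    intro D
    simp only [hA, Finset.mem_biUnion, Finset.mem_Icc, Finset.mem_powersetCard]
    constructor
    · rintro ⟨k, ⟨hk2, hkn⟩, hsub, hcard⟩
      refine ⟨fun hzD => ?_, by omega⟩
      have := hsub hzD
      simp at this
    · rintro ⟨hzD, h2⟩
      refine ⟨D.card, ⟨h2, ?_⟩, ?_, rfl⟩
      · have hsub : D ⊆ {z}ᶜ := fun x hx => by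
          simp only [Finset.mem_compl, Finset.mem_singleton]
          rintro rfl; exact hzD hx
        have := Finset.card_le_card hsub
        rw [Finset.card_compl, Finset.card_singleton, Fintype.card_fin] at this
        omega
      · exact fun x hx => by
          simp only [Finset.mem_compl, Finset.mem_singleton]
          rintro rfl; exact hzD hx
  have hsum : (∑ D : {D : Finset (Fin n) // z ∉ D ∧ 2 ≤ D.card},
      (D.1.card).factorial * (n - 1).choose (D.1.card - 1))
      = ∑ D ∈ A, (D.card).factorial * (n - 1).choose (D.card - 1) :=
    (Finset.sum_subtype A hAmem (fun D => D.card.factorial * (n - 1).choose (D.card - 1))).symm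
  rw [hsum, hA, Finset.sum_biUnion]
  · apply Finset.sum_congr rfl
    intro k hk
    rw [Finset.mem_Icc] at hk
    have : ∀ D ∈ Finset.powersetCard k ({z}ᶜ : Finset (Fin n)),
        (D.card).factorial * (n - 1).choose (D.card - 1)
          = k.factorial * (n - 1).choose (k - 1) := by
      intro D hD
      rw [(Finset.mem_powersetCard.mp hD).2]
    rw [Finset.sum_congr rfl this, Finset.sum_const, Finset.card_powersetCard,
      Finset.card_compl, Finset.card_singleton, Fintype.card_fin, smul_eq_mul]
    ring
  · -- pairwise disjoint
    intro a ha b hb hab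
    apply Finset.disjoint_left.mpr
    intro D hDa hDb
    rw [Finset.mem_powersetCard] at hDa hDb
    exact hab (hDa.2 ▸ hDb.2 ▸ rfl)
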